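/- Let I ⊆ ℝ be an open interval, g : I → ℝ smooth and nowhere zero, and α ∈ ℝ. If y : I → ℝ is a nowhere-zero solution of the nonlinear ODE y'' − (g'(x)/(2g(x)))·y' + g(x)·y − 2α·g(x)/y³ = 0, then the function x ↦ (y'(x))²/g(x) + y(x)² + 2α/y(x)² is constant on I. -/

import Mathlib

/-- If `y` is a nowhere-zero solution of the nonlinear ODE
`y'' − (g'/(2g))·y' + g·y − 2α·g/y³ = 0` on an open interval `I` where the smooth `g`
is nowhere zero, then `(y')²/g + y² + 2α/y²` is constant on `I`. -/
theorem invariant_deformed_pinney_ode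
    (I : Set ℝ) (hI : IsOpen I) (hIconv : Convex ℝ I)
    (g y : ℝ → ℝ) (α : ℝ)
    (hg : ContDiffOn ℝ (⊤ : ℕ∞) g I) (hg0 : ∀ x ∈ I, g x ≠ 0)
    (hy : ContDiffOn ℝ 2 y I) (hy0 : ∀ x ∈ I, y x ≠ 0)
    (hyode : ∀ x ∈ I,
      deriv (deriv y) x - deriv g x / (2 * g x) * deriv y x + g x * y x
        - 2 * α * g x / (y x) ^ 3 = 0) :
    ∀ a ∈ I, ∀ b ∈ I,
      (deriv y a) ^ 2 / g a + (y a) ^ 2 + 2 * α / (y a) ^ 2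
        = (deriv y b) ^ 2 / g b + (y b) ^ 2 + 2 * α / (y b) ^ 2 := by
  set E : ℝ → ℝ := fun t => (deriv y t) ^ 2 / g t + (y t) ^ 2 + 2 * α / (y t) ^ 2 with hE
  have hy' : ContDiffOn ℝ 1 (deriv y) I := hy.deriv_of_isOpen hI (by norm_num)
  have key : ∀ x ∈ I, HasDerivAt E 0 x := by
    intro x hx
    have hxm : I ∈ nhds x := hI.mem_nhds hx
    have hYd : HasDerivAt y (deriv y x) x :=
      ((hy.differentiableOn (by norm_num)).differentiableAt hxm).hasDerivAt
    have hY'd : HasDerivAt (deriv y) (deriv (deriv y) x) x :=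
      ((hy'.differentiableOn (by norm_num)).differentiableAt hxm).hasDerivAt
    have hGd : HasDerivAt g (deriv g x) x :=
      ((hg.differentiableOn (by norm_num)).differentiableAt hxm).hasDerivAt
    have hG0 := hg0 x hx
    have hY0 := hy0 x hx
    set Y := y x
    set Y' := deriv y x
    set Y'' := deriv (deriv y) x
    set G := g x
    set G' := deriv g x
    have h1 : HasDerivAt (fun t => (deriv y t) ^ 2 / g t)
        ((2 * Y' * Y'' * G - Y' ^ 2 * G') / G ^ 2) x := by
      have := ((hY'd.fun_pow 2).fun_div hGd hG0)
      refine this.congr_deriv ?_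
      ring
    have h2 : HasDerivAt (fun t => (y t) ^ 2) (2 * Y * Y') x := by
      have := hYd.fun_pow 2
      refine this.congr_deriv ?_; ring
    have h3 : HasDerivAt (fun t => 2 * α / (y t) ^ 2)
        (-(2 * α * (2 * Y * Y')) / (Y ^ 2) ^ 2) x := by
      have := (hasDerivAt_const x (2 * α)).fun_div (hYd.fun_pow 2) (pow_ne_zero 2 hY0)
      refine this.congr_deriv ?_
      push_cast
      ring
    have hsum := (h1.add h2).add h3
    have hode : Y'' - G' / (2 * G) * Y' + G * Y - 2 * α * G / Y ^ 3 = 0 := hyode x hx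
    have hzero : (2 * Y' * Y'' * G - Y' ^ 2 * G') / G ^ 2 + 2 * Y * Y'
        + -(2 * α * (2 * Y * Y')) / (Y ^ 2) ^ 2 = 0 := by
      have hY'' : Y'' = G' / (2 * G) * Y' - G * Y + 2 * α * G / Y ^ 3 := by
        field_simp at hode ⊢; linarith
      rw [hY'']
      field_simp
      ring
    rw [hzero] at hsum
    exact hsum
  have hdiff : DifferentiableOn ℝ E I := fun x hx =>
    (key x hx).differentiableAt.differentiableWithinAt
  have hfd : ∀ x ∈ I, fderivWithin ℝ E I x = 0 := by
    intro x hx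
    rw [fderivWithin_of_isOpen hI hx, (key x hx).hasFDerivAt.fderiv]
    ext
    simp
  intro a ha b hb
  exact hIconv.is_const_of_fderivWithin_eq_zero hdiff hfd ha hb
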